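/- Let C > 0 and let π_{S+}(x̃) be the Euclidean projection of x̃ ∈ ℝⁿ onto K_{S+} = {v ∈ ℝⁿ : ∑ᵢ vᵢ = C, v ≥ 0}. Then there exists a unique nonnegative scalar T such that ∑ᵢ max(π_S(x̃)ᵢ − T, 0) = C and π_{S+}(x̃) = max(π_S(x̃) − T·1, 0) componentwise, where π_S(x̃)ᵢ = x̃ᵢ + (C − ∑ⱼ x̃ⱼ)/n. -/

import Mathlib

/-- Water-filling representation of the projection onto `{v : ∑ v = C, v ≥ 0}`:
there is a unique nonnegative threshold `T` with `∑ i, max (π_S(xt) i - T) 0 = C`,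
and the projection equals `max (π_S(xt) - T·1) 0` componentwise,
where `π_S(xt) i = xt i + (C - ∑ j, xt j)/n`. -/
theorem stmt4 (n : ℕ) (hn : 1 ≤ n) (C : ℝ) (hC : 0 < C) (xt p : Fin n → ℝ)
    (hpK : ∑ i, p i = C) (hp0 : ∀ i, 0 ≤ p i)
    (hmin : ∀ v : Fin n → ℝ, ∑ i, v i = C → (∀ i, 0 ≤ v i) →
      ∑ i, (p i - xt i) ^ 2 ≤ ∑ i, (v i - xt i) ^ 2) :
    ∃ T : ℝ, 0 ≤ T ∧
      (∑ i, max (xt i + (C - ∑ j, xt j) / n - T) 0 = C) ∧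
      (∀ i, p i = max (xt i + (C - ∑ j, xt j) / n - T) 0) ∧
      (∀ T' : ℝ, 0 ≤ T' →
        (∑ i, max (xt i + (C - ∑ j, xt j) / n - T') 0 = C) → T' = T) := by
  have hn0 : (0:ℝ) < n := by exact_mod_cast hn
  set c : ℝ := (C - ∑ j, xt j) / n with hc
  have hysum : ∑ i, (xt i + c) = C := by
    rw [Finset.sum_add_distrib, Finset.sum_const, Finset.card_fin, nsmul_eq_mul, hc]
    field_simp
    ring
  -- key variational lemma
  have key : ∀ i j : Fin n, 0 < p j → xt i - p i ≤ xt j - p j := by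
    intro i j hpj
    rcases eq_or_ne i j with rfl | hij
    · exact le_rfl
    by_contra hlt
    push_neg at hlt
    set a : ℝ := (p i - xt i) - (p j - xt j) with ha
    have ha0 : a < 0 := by simp only [ha]; linarith
    set ε : ℝ := min (p j) (-a/2) with hε
    have hε0 : 0 < ε := lt_min hpj (by linarith)
    have hεj : ε ≤ p j := min_le_left _ _
    have hεa : ε ≤ -a/2 := min_le_right _ _
    set v : Fin n → ℝ :=
      fun k => p k + ((if k = i then ε else 0) - (if k = j then ε else 0)) with hv
    have hvsum : ∑ k, v k = C := by
      simp [hv, Finset.sum_add_distrib, Finset.sum_sub_distrib, Finset.sum_ite_eq', hpK]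
    have hv0 : ∀ k, 0 ≤ v k := by
      intro k
      simp only [hv]
      split_ifs with h1 h2 h3
      · exact absurd (h1.symm.trans h2) hij
      · linarith [hp0 k]
      · rw [h3]; linarith
      · simpa using hp0 k
    have hexp : ∑ k, (v k - xt k)^2 = ∑ k, (p k - xt k)^2 + (2*ε*a + 2*ε^2) := by
      have hpt : ∀ k, (v k - xt k)^2 = (p k - xt k)^2 +
          (2*(p k - xt k)*((if k = i then ε else 0) - (if k = j then ε else 0)) +
            ((if k = i then ε^2 else 0) + (if k = j then ε^2 else 0))) := by
        intro k
        simp only [hv]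
        split_ifs with h1 h2 h3
        · exact absurd (h1.symm.trans h2) hij
        · ring
        · ring
        · ring
      rw [Finset.sum_congr rfl (fun k _ => hpt k), Finset.sum_add_distrib,
        Finset.sum_add_distrib, Finset.sum_add_distrib]
      simp only [mul_sub, Finset.sum_sub_distrib, mul_ite, mul_zero,
        Finset.sum_ite_eq', Finset.mem_univ, if_true]
      ring_nf
      simp only [ha]
      ring
    have hm := hmin v hvsum hv0
    rw [hexp] at hm
    nlinarith
  obtain ⟨j0, hj0⟩ : ∃ j, 0 < p j := by
    by_contra h
    push_neg at h
    have hle : ∑ i, p i ≤ 0 := Finset.sum_nonpos (fun i _ => h i)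
    rw [hpK] at hle
    linarith
  set T : ℝ := xt j0 + c - p j0 with hT
  have hrep : ∀ i, p i = max (xt i + c - T) 0 := by
    intro i
    rcases (hp0 i).lt_or_eq with hpi | hpi
    · have h1 := key i j0 hj0
      have h2 := key j0 i hpi
      have heq : xt i + c - T = p i := by simp only [hT]; linarith
      rw [heq]
      exact (max_eq_left hpi.le).symm
    · have h1 := key i j0 hj0
      have hle : xt i + c - T ≤ 0 := by simp only [hT]; linarith
      rw [← hpi, max_eq_right hle]
  have hsum : ∑ i, max (xt i + c - T) 0 = C := by
    rw [← hpK]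
    exact (Finset.sum_congr rfl (fun i _ => (hrep i).symm))
  have hT0 : 0 ≤ T := by
    have h1 : ∑ i, (xt i + c - T) ≤ C := by
      rw [← hsum]
      exact Finset.sum_le_sum (fun i _ => le_max_left _ _)
    have h2 : ∑ i, (xt i + c - T) = C - n * T := by
      rw [Finset.sum_sub_distrib, hysum, Finset.sum_const, Finset.card_fin, nsmul_eq_mul]
    rw [h2] at h1
    nlinarith
  -- strict monotonicity helper
  have mono : ∀ A B : ℝ, A < B → (∑ i, max (xt i + c - A) 0 = C) →
      ∑ i, max (xt i + c - B) 0 < C := by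
    intro A B hAB hA
    obtain ⟨i0, hi0⟩ : ∃ i, 0 < max (xt i + c - A) 0 := by
      by_contra hno
      push_neg at hno
      have := Finset.sum_nonpos (fun i (_ : i ∈ Finset.univ) => hno i)
      rw [hA] at this
      linarith
    have h1 : 0 < xt i0 + c - A := (lt_max_iff.mp hi0).resolve_right (lt_irrefl 0)
    calc ∑ i, max (xt i + c - B) 0 < ∑ i, max (xt i + c - A) 0 := by
          apply Finset.sum_lt_sum (fun i _ => max_le_max (by linarith) le_rfl)
          refine ⟨i0, Finset.mem_univ i0, ?_⟩
          have : max (xt i0 + c - A) 0 = xt i0 + c - A := max_eq_left h1.le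
          rw [this]
          exact max_lt (by linarith) h1
      _ = C := hA
  refine ⟨T, hT0, hsum, hrep, ?_⟩
  intro T' hT'0 hsum'
  by_contra hne
  rcases lt_or_gt_of_ne hne with h | h
  · exact absurd hsum (ne_of_lt (mono T' T h hsum'))
  · exact absurd hsum' (ne_of_lt (mono T T' h hsum))
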